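/- Let $(R,\mathfrak{m},k)$ be a commutative Noetherian local ring and let $(M_i)_{i \in I}$ be a family of $\mathfrak{m}$-adically complete $R$-modules. Then the product $\prod_{i \in I} M_i$ is $\mathfrak{m}$-adically complete. -/

import Mathlib

open CategoryTheory IsLocalRing

universe u

noncomputable section

/-- `Ext^i_R(M,N)` as a module, via the derived functor `Ext` on `ModuleCat R`. -/
def eExt (R : Type u) [CommRing R] (i : ℕ) (M N : Type u)
    [AddCommGroup M] [Module R M] [AddCommGroup N] [Module R N] : ModuleCat R :=
  ((Ext R (ModuleCat.{u} R) i).obj (Opposite.op (ModuleCat.of R M))).obj (ModuleCat.of R N)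

/-- `Tor_i^R(M,N)` as a module, via the derived functor `Tor` on `ModuleCat R`. -/
def eTor (R : Type u) [CommRing R] (i : ℕ) (M N : Type u)
    [AddCommGroup M] [Module R M] [AddCommGroup N] [Module R N] : ModuleCat R :=
  ((Tor (ModuleCat.{u} R) i).obj (ModuleCat.of R M)).obj (ModuleCat.of R N)

/-- depth of a module over a local ring: `inf {i | Ext^i(k, M) ≠ 0}`, `⊤` if none. -/
def eDepth (R : Type u) [CommRing R] [IsLocalRing R] (M : Type u)
    [AddCommGroup M] [Module R M] : ℕ∞ :=
  ⨅ (i : ℕ) (_ : Nontrivial (eExt R i (ResidueField R) M)), (i : ℕ∞)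

/-- width of a module over a local ring: `inf {i | Tor_i(k, M) ≠ 0}`, `⊤` if none. -/
def eWidth (R : Type u) [CommRing R] [IsLocalRing R] (M : Type u)
    [AddCommGroup M] [Module R M] : ℕ∞ :=
  ⨅ (i : ℕ) (_ : Nontrivial (eTor R i (ResidueField R) M)), (i : ℕ∞)

/-- A finitely generated module is totally reflexive (G-dimension zero) iff it is
reflexive and `Ext^i(M,R) = 0 = Ext^i(M^*, R)` for all `i ≥ 1`. -/
def IsTotallyReflexive (R : Type u) [CommRing R] (M : Type u)
    [AddCommGroup M] [Module R M] : Prop :=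
  Module.Finite R M ∧ Module.IsReflexive R M ∧
    ∀ i : ℕ, 1 ≤ i →
      Subsingleton (eExt R i M R) ∧ Subsingleton (eExt R i (Module.Dual R M) R)

/-- A list of elements is a system of parameters of a local ring. -/
def IsSOP (R : Type u) [CommRing R] [IsLocalRing R] (xs : List R) : Prop :=
  (∀ x ∈ xs, x ∈ maximalIdeal R) ∧
    ((xs.length : WithBot ℕ∞) = ringKrullDim R) ∧
    maximalIdeal R ≤ (Ideal.span {x | x ∈ xs}).radical

/-- A big Cohen-Macaulay module: some system of parameters is a regular sequence on it. -/
def IsBigCM (R : Type u) [CommRing R] [IsLocalRing R] (B : Type u)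
    [AddCommGroup B] [Module R B] : Prop :=
  ∃ xs : List R, IsSOP R xs ∧ RingTheory.Sequence.IsRegular B xs

/-- A module is Gorenstein injective if it is a cosyzygy of a totally acyclic complex of
injectives: an exact complex `I` of injective modules with `N ≅ im(I₁ → I₀)` such that
`Hom(E, I)` is exact for every injective module `E`. -/
def IsGorensteinInjective (R : Type u) [CommRing R] (N : Type u)
    [AddCommGroup N] [Module R N] : Prop :=
  ∃ I : ChainComplex (ModuleCat.{u} R) ℤ,
    (∀ i, CategoryTheory.Injective (I.X i)) ∧
    (∀ i, Subsingleton (I.homology i)) ∧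
    Nonempty (N ≃ₗ[R] LinearMap.range ((I.d 1 0).hom : I.X 1 →ₗ[R] I.X 0)) ∧
    ∀ (E : ModuleCat.{u} R), CategoryTheory.Injective E →
      ∀ (i : ℤ) (f : E ⟶ I.X i), f ≫ I.d i (i - 1) = 0 →
        ∃ g : E ⟶ I.X (i + 1), g ≫ I.d (i + 1) i = f

/-- A module has finite projective dimension: for some `n`, `Ext^i(M, -)` vanishes
for all `i > n`. -/
def HasFiniteProjDim (R : Type u) [CommRing R] (M : Type u)
    [AddCommGroup M] [Module R M] : Prop :=
  ∃ n : ℕ, ∀ (N : ModuleCat.{u} R) (i : ℕ), n < i →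
    Subsingleton (((Ext R (ModuleCat.{u} R) i).obj (Opposite.op (ModuleCat.of R M))).obj N)

end


lemma memA {R M : Type*} [CommRing R] [AddCommGroup M] [Module R M] {k : ℕ}
    (a : Fin k → R) (x : M) :
    x ∈ Ideal.span (Set.range a) • (⊤ : Submodule R M) ↔
      ∃ m : Fin k → M, ∑ j, a j • m j = x := by
  constructor
  · intro hx
    refine Submodule.smul_induction_on hx ?_ ?_
    · intro r hr n _
      obtain ⟨c, hc⟩ := (Submodule.mem_span_range_iff_exists_fun R).1 hr
      refine ⟨fun j => c j • n, ?_⟩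
      rw [← hc, Finset.sum_smul]
      refine Finset.sum_congr rfl fun j _ => ?_
      simp [smul_smul, smul_eq_mul, mul_comm]
    · rintro x y ⟨mx, rfl⟩ ⟨my, rfl⟩
      exact ⟨mx + my, by simp [Finset.sum_add_distrib, smul_add]⟩
  · rintro ⟨m, rfl⟩
    exact Submodule.sum_mem _ fun j _ => Submodule.smul_mem_smul
      (Ideal.subset_span ⟨j, rfl⟩) trivial

lemma memB {R : Type*} [CommRing R] {ι : Type*} {M : ι → Type*}
    [∀ i, AddCommGroup (M i)] [∀ i, Module R (M i)] (J : Ideal R)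
    {x : ∀ i, M i} (hx : x ∈ J • (⊤ : Submodule R (∀ i, M i))) (i : ι) :
    x i ∈ J • (⊤ : Submodule R (M i)) := by
  have h := Submodule.mem_map_of_mem (f := LinearMap.proj (φ := M) i) hx
  rw [Submodule.map_smul''] at h
  exact (smul_mono_right J le_top : _ ≤ J • (⊤ : Submodule R (M i))) h

lemma memC {R : Type*} [CommRing R] {ι : Type*} {M : ι → Type*}
    [∀ i, AddCommGroup (M i)] [∀ i, Module R (M i)] {J : Ideal R} (hJ : J.FG)
    {x : ∀ i, M i} (hx : ∀ i, x i ∈ J • (⊤ : Submodule R (M i))) :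
    x ∈ J • (⊤ : Submodule R (∀ i, M i)) := by
  obtain ⟨k, a, rfl⟩ := Submodule.fg_iff_exists_fin_generating_family.1 hJ
  choose m hm using fun i => (memA a (x i)).1 (hx i)
  refine (memA a x).2 ⟨fun j i => m i j, ?_⟩
  funext i
  simpa using hm i


theorem stmt_4 (R : Type u) [CommRing R] [IsLocalRing R] [IsNoetherianRing R]
    (ι : Type u) (M : ι → Type u) [∀ i, AddCommGroup (M i)] [∀ i, Module R (M i)]
    [∀ i, IsAdicComplete (maximalIdeal R) (M i)] :
    IsAdicComplete (maximalIdeal R) (∀ i, M i) := by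
  haveI h1 : IsHausdorff (maximalIdeal R) (∀ i, M i) := by
    constructor
    intro x hx
    funext i
    refine IsHausdorff.haus (IsAdicComplete.toIsHausdorff (I := maximalIdeal R) (M := M i))
      (x i) fun n => ?_
    exact SModEq.zero.mpr (memB _ (SModEq.zero.mp (hx n)) i)
  haveI h2 : IsPrecomplete (maximalIdeal R) (∀ i, M i) := by
    constructor
    intro f hf
    have key : ∀ i, ∃ L : M i, ∀ n, f n i ≡ L
        [SMOD (maximalIdeal R ^ n • ⊤ : Submodule R (M i))] := by
      intro i
      refine IsPrecomplete.prec (IsAdicComplete.toIsPrecomplete (I := maximalIdeal R))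
        (f := fun n => f n i) fun {m n} h => ?_
      have hmn := hf h
      rw [SModEq.sub_mem] at hmn ⊢
      exact memB _ hmn i
    choose L hL using key
    refine ⟨L, fun n => ?_⟩
    rw [SModEq.sub_mem]
    refine memC (IsNoetherian.noetherian _) fun i => ?_
    have h := hL i n
    rw [SModEq.sub_mem] at h
    exact h
  exact IsAdicComplete.mk
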